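/- arXiv:2206.08725 — 2 statements merged into one kernel-verified Lean document; each statement's English description precedes it below -/
import Mathlib

section
/- Let C = γ_1C_1 ⊕ γ_2C_2 ⊕ γ_3C_3 ⊕ γ_4C_4 be a linear code of length n over R whose component codes C_i have generator matrices G_i = [I_{k_i} : M_i] in standard form (k_i × n matrices of rank k_i whose rows form a basis of C_i). Let P_i = G_iG_i^T, and suppose for each i = 1,2,3,4 there is an integer t_i with 0 ≤ t_i ≤ k_i − 1 such that det((P_i)_{S_i}) = 0 for every S_i ⊆ {1,…,k_i} with 0 ≤ |S_i| ≤ t_i, and there exists R_i ⊆ {1,…,k_i} with |R_i| = t_i + 1 and det((P_i)_{R_i}) ≠ 0. Let α = (α_1,…,α_n) ∈ R^n, with α_j = Σ_{i=1}^4 γ_i α_{ji}, satisfy α_{ji} ∈ F_q \ {1, −1} for j ∈ R_i and α_{ji} ∈ {1, −1} for j ∈ {1,…,n} \ R_i, for each i = 1,2,3,4. Then C^α is a Euclidean LCD code over R. -/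
open scoped BigOperators

/-- The ring `R = F_q + uF_q + vF_q + uvF_q ≅ F_q^4` (componentwise operations). -/
abbrev RR (F : Type*) := Fin 4 → F

/-- The pairwise orthogonal idempotents `γ_1, γ_2, γ_3, γ_4` of `R`,
realized as the standard idempotents of `F_q^4`. -/
def gam (F : Type*) [Field F] (i : Fin 4) : RR F := Pi.single i 1

/-- The `i`-th component code `C_i ⊆ F_q^n` of a code `C ⊆ R^n`. -/
def compCode {F : Type*} [Field F] {n : ℕ} (C : Set (Fin n → RR F)) (i : Fin 4) :
    Set (Fin n → F) :=
  {x | ∃ c ∈ C, ∀ j, c j i = x j}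

/-- Euclidean dual of a code over `R`. -/
def euclDualR {F : Type*} [Field F] {n : ℕ} (C : Set (Fin n → RR F)) :
    Set (Fin n → RR F) :=
  {s | ∀ t ∈ C, ∑ j, t j * s j = 0}

/-- `l`-Galois dual of a code over `R`; apply with `pl = p ^ l`
(the `l`-Galois inner product is `[t,s]_l = ∑ j, t j * (s j) ^ (p ^ l)`,
since `F^l(r) = r ^ (p ^ l)`). -/
def galDualR {F : Type*} [Field F] {n : ℕ} (pl : ℕ) (C : Set (Fin n → RR F)) :
    Set (Fin n → RR F) :=
  {s | ∀ t ∈ C, ∑ j, t j * s j ^ pl = 0}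

/-- `l`-Galois dual of a code over the field `F = F_q`; apply with `pl = p ^ l`. -/
def galDualF {F : Type*} [Field F] {ι : Type*} [Fintype ι] (pl : ℕ) (D : Set (ι → F)) :
    Set (ι → F) :=
  {x | ∀ c ∈ D, ∑ j, c j * x j ^ pl = 0}

/-- Lee weight of a vector over `R`: the sum of the Hamming weights of the
quadruples of `γ`-components of the coordinates. -/
def leeWt {F : Type*} [Field F] [DecidableEq F] {n : ℕ} (c : Fin n → RR F) : ℕ :=
  ∑ j, hammingNorm (c j)

/-- Minimum Lee distance of a code over `R`. -/
noncomputable def dLee {F : Type*} [Field F] [DecidableEq F] {n : ℕ} (C : Set (Fin n → RR F)) : ℕ :=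
  sInf (leeWt '' {c ∈ C | c ≠ 0})

/-- Minimum Hamming distance of a code over `F_q`. -/
noncomputable def dHam {F : Type*} [Field F] [DecidableEq F] {ι : Type*} [Fintype ι]
    (D : Set (ι → F)) : ℕ :=
  sInf (hammingNorm '' {x ∈ D | x ≠ 0})

/-- The Gray map `ρ : R^n → F_q^{4n}`. -/
def gray {F : Type*} [Field F] {n : ℕ} (c : Fin n → RR F) : Fin n × Fin 4 → F :=
  fun ji => c ji.1 ji.2

/-- The code `C^α = {(α_1 c_1, …, α_n c_n) : c ∈ C}` over `R`. -/
def scaleCode {F : Type*} [Field F] {n : ℕ} (α : Fin n → RR F)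
    (C : Set (Fin n → RR F)) : Set (Fin n → RR F) :=
  (fun c => fun j => α j * c j) '' C

/-- The code `C^a = {(a_1 c_1, …, a_n c_n) : c ∈ C}` over `F_q`. -/
def scaleCodeF {F : Type*} [Field F] {n : ℕ} (a : Fin n → F)
    (D : Set (Fin n → F)) : Set (Fin n → F) :=
  (fun c => fun j => a j * c j) '' D

/-- `P_S`: the submatrix of `P` obtained by deleting the rows and columns
indexed by `S` (its determinant is `1` when `S` is everything, since the
empty matrix has determinant `1`). -/
def minorOff {F : Type*} [Field F] {m : ℕ} (P : Matrix (Fin m) (Fin m) F)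
    (S : Finset (Fin m)) : Matrix {i : Fin m // i ∉ S} {i : Fin m // i ∉ S} F :=
  P.submatrix (fun a => (a : Fin m)) (fun a => (a : Fin m))


open Matrix in
lemma detPiecewiseSingle {F : Type*} [Field F] {m : ℕ} (P : Matrix (Fin m) (Fin m) F)
    (S : Finset (Fin m)) :
    (Matrix.of (S.piecewise (fun r => (Pi.single r 1 : Fin m → F)) (fun r => P r))).det
      = (minorOff P S).det := by
  classical
  set M : Matrix (Fin m) (Fin m) F :=
    Matrix.of (S.piecewise (fun r => (Pi.single r 1 : Fin m → F)) (fun r => P r)) with hMdef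
  rw [← Matrix.det_submatrix_equiv_self (Equiv.sumCompl (· ∈ S)) M]
  have hblock : M.submatrix (Equiv.sumCompl (· ∈ S)) (Equiv.sumCompl (· ∈ S))
      = Matrix.fromBlocks 1 0
      (Matrix.of fun (a : {i : Fin m // i ∉ S}) (b : {i : Fin m // i ∈ S}) => P a.1 b.1)
      (minorOff P S) := by
    ext i j
    cases i with
    | inl a =>
      have h1 : ∀ j' : Fin m, M a.1 j' = (Pi.single (a : Fin m) 1 : Fin m → F) j' := by
        intro j'
        simp [hMdef, Finset.piecewise_eq_of_mem _ _ _ a.2]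
      cases j with
      | inl b =>
        simp only [Matrix.submatrix_apply, Equiv.sumCompl_apply_inl, h1]
        by_cases hab : a = b
        · subst hab
          simp
        · have hab' : (b : Fin m) ≠ (a : Fin m) := fun h => hab (Subtype.ext h.symm)
          simp [Pi.single_apply, hab', Matrix.one_apply, hab]
      | inr b =>
        have hab' : (b : Fin m) ≠ (a : Fin m) := fun h => b.2 (h ▸ a.2)
        simp [Matrix.submatrix_apply, h1, Pi.single_apply, hab']
    | inr a =>
      have h1 : ∀ j' : Fin m, M a.1 j' = P a.1 j' := by
        intro j'
        simp [hMdef, Finset.piecewise_eq_of_notMem _ _ _ a.2]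
      cases j with
      | inl b => simp [Matrix.submatrix_apply, h1]
      | inr b => simp [minorOff, Matrix.submatrix_apply, h1]
  rw [hblock, Matrix.det_fromBlocks_zero₁₂, Matrix.det_one, one_mul]

open Matrix in
lemma detAddDiag {F : Type*} [Field F] {m : ℕ} (P : Matrix (Fin m) (Fin m) F)
    (d : Fin m → F) (R : Finset (Fin m))
    (hd0 : ∀ r, r ∉ R → d r = 0) (hd : ∀ r ∈ R, d r ≠ 0)
    (hvan : ∀ S : Finset (Fin m), S.card < R.card → (minorOff P S).det = 0)
    (hR : (minorOff P R).det ≠ 0) :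
    (P + Matrix.diagonal d).det ≠ 0 := by
  classical
  have h1 : (P + Matrix.diagonal d).det
      = Matrix.detRowAlternating
          ((fun r => (Matrix.diagonal d : Matrix (Fin m) (Fin m) F) r) + fun r => P r) := by
    show Matrix.detRowAlternating _ = _
    congr 1
    funext r s
    exact add_comm _ _
  have h2 : ∀ S : Finset (Fin m),
      Matrix.detRowAlternating
        (S.piecewise (fun r => (Matrix.diagonal d : Matrix (Fin m) (Fin m) F) r) (fun r => P r))
      = (∏ r ∈ S, d r) * (minorOff P S).det := by
    intro S
    set mrows : Fin m → Fin m → F :=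
      S.piecewise (fun r => (Pi.single r 1 : Fin m → F)) (fun r => P r) with hmrows
    have hm' : S.piecewise (fun r => (Matrix.diagonal d : Matrix (Fin m) (Fin m) F) r)
          (fun r => P r)
        = S.piecewise (fun r => d r • mrows r) mrows := by
      funext r
      by_cases hr : r ∈ S
      · simp only [Finset.piecewise_eq_of_mem _ _ _ hr, hmrows]
        funext s
        by_cases hrs : r = s
        · subst hrs; simp
        · simp [Matrix.diagonal_apply, Pi.single_apply, hrs, Ne.symm hrs]
      · simp only [Finset.piecewise_eq_of_notMem _ _ _ hr, hmrows]
    rw [hm']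
    have hps : Matrix.detRowAlternating (S.piecewise (fun r => d r • mrows r) mrows)
        = (∏ r ∈ S, d r) • Matrix.detRowAlternating mrows :=
      (Matrix.detRowAlternating (R := F) (n := Fin m)).toMultilinearMap.map_piecewise_smul
        d mrows S
    rw [hps, smul_eq_mul]
    congr 1
    exact detPiecewiseSingle P S
  have hadd : Matrix.detRowAlternating
        ((fun r => (Matrix.diagonal d : Matrix (Fin m) (Fin m) F) r) + fun r => P r)
      = ∑ S : Finset (Fin m), Matrix.detRowAlternating
          (S.piecewise (fun r => (Matrix.diagonal d : Matrix (Fin m) (Fin m) F) r)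
            (fun r => P r)) :=
    (Matrix.detRowAlternating (R := F) (n := Fin m)).toMultilinearMap.map_add_univ _ _
  have key : (P + Matrix.diagonal d).det
      = ∑ S : Finset (Fin m), (∏ r ∈ S, d r) * (minorOff P S).det := by
    rw [h1, hadd]
    exact Finset.sum_congr rfl fun S _ => h2 S
  rw [key]
  rw [Finset.sum_eq_single_of_mem R (Finset.mem_univ R)]
  · exact mul_ne_zero (Finset.prod_ne_zero_iff.mpr hd) hR
  · intro S _ hSR
    by_cases hsub : S ⊆ R
    · rw [hvan S (Finset.card_lt_card (hsub.ssubset_of_ne hSR)), mul_zero]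
    · obtain ⟨r, hrS, hrR⟩ := Finset.not_subset.mp hsub
      rw [Finset.prod_eq_zero hrS (hd0 r hrR), zero_mul]

open Matrix in
/-- construction of Euclidean LCD codes `C^α` over `R` from a linear
code `C = γ_1C_1 ⊕ γ_2C_2 ⊕ γ_3C_3 ⊕ γ_4C_4` with generator matrices
`G_i = [I_{k_i} : M_i]`, `P_i = G_iG_iᵀ`. -/
theorem statement12 {p e n : ℕ} (hp : p.Prime) (he : 0 < e)
    (F : Type*) [Field F] [Fintype F] (hcard : Fintype.card F = p ^ e)
    (k : Fin 4 → ℕ) (hkn : ∀ i, k i ≤ n)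
    (G : ∀ i, Matrix (Fin (k i)) (Fin n) F)
    -- the rows of `G i` form a basis of `C_i` (`G i` has rank `k i`):
    (hGli : ∀ i, LinearIndependent F (fun r : Fin (k i) => G i r))
    (C : Submodule (RR F) (Fin n → RR F))
    (hC : ∀ i, compCode (C : Set (Fin n → RR F)) i =
      (Submodule.span F (Set.range (fun r : Fin (k i) => G i r)) : Set (Fin n → F)))
    -- standard form `G_i = [I_{k_i} : M_i]`:
    (hstd : ∀ i, ∀ r s : Fin (k i), G i r (Fin.castLE (hkn i) s) = if r = s then 1 else 0)
    (t : Fin 4 → ℕ) (ht : ∀ i, t i + 1 ≤ k i)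
    (hvanish : ∀ i, ∀ S : Finset (Fin (k i)), S.card ≤ t i →
      (minorOff (G i * (G i)ᵀ) S).det = 0)
    (R : ∀ i, Finset (Fin (k i))) (hRcard : ∀ i, (R i).card = t i + 1)
    (hRdet : ∀ i, (minorOff (G i * (G i)ᵀ) (R i)).det ≠ 0)
    (α : Fin n → RR F)
    -- `α_{ji} ∈ F_q \ {1, −1}` for `j ∈ R_i`:
    (hα1 : ∀ i, ∀ s ∈ R i,
      α (Fin.castLE (hkn i) s) i ≠ 1 ∧ α (Fin.castLE (hkn i) s) i ≠ -1)
    -- `α_{ji} ∈ {1, −1}` for `j ∉ R_i`: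
    (hα2 : ∀ (i : Fin 4) (j : Fin n), (∀ s ∈ R i, Fin.castLE (hkn i) s ≠ j) →
      α j i = 1 ∨ α j i = -1) :
    scaleCode α (C : Set (Fin n → RR F)) ∩
      euclDualR (scaleCode α (C : Set (Fin n → RR F))) = {0} := by
  classical
  ext x
  simp only [Set.mem_inter_iff, Set.mem_singleton_iff]
  constructor
  · rintro ⟨hx1, hx2⟩
    obtain ⟨c, hcC, rfl⟩ := hx1
    have hcomp : ∀ i : Fin 4, (fun j => α j i * c j i) = (0 : Fin n → F) := by
      intro i
      set a : Fin n → F := fun j => α j i with ha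
      set GA : Matrix (Fin (k i)) (Fin n) F := Matrix.of fun r j => G i r j * a j with hGA
      set xi : Fin n → F := fun j => a j * c j i with hxi
      -- c's i-component lies in the span of the rows of G i
      have hci : (fun j => c j i) ∈ Submodule.span F (Set.range fun r : Fin (k i) => G i r) := by
        have : (fun j => c j i) ∈ compCode (C : Set (Fin n → RR F)) i :=
          ⟨c, hcC, fun j => rfl⟩
        rw [hC i] at this
        exact this
      obtain ⟨w, hw⟩ := (Submodule.mem_span_range_iff_exists_fun F).mp hci
      have hxw : ∀ j, xi j = ∑ r, w r * GA r j := by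
        intro j
        have := congrFun hw j
        simp only [Finset.sum_apply, Pi.smul_apply, smul_eq_mul] at this
        calc xi j = a j * c j i := rfl
          _ = a j * ∑ r, w r * G i r j := by rw [← this]
          _ = ∑ r, w r * GA r j := by
              rw [Finset.mul_sum]
              exact Finset.sum_congr rfl fun r _ => by simp [hGA]; ring
      -- orthogonality
      have horth : ∀ r, ∑ j, GA r j * xi j = 0 := by
        intro r
        have hGr : (G i r : Fin n → F) ∈ compCode (C : Set (Fin n → RR F)) i := by
          rw [hC i]
          exact Submodule.subset_span (Set.mem_range_self r)
        obtain ⟨cr, hcrC, hcr⟩ := hGr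
        have hmem : (fun j => α j * cr j) ∈ scaleCode α (C : Set (Fin n → RR F)) :=
          ⟨cr, hcrC, rfl⟩
        have h0 := hx2 _ hmem
        have h0i := congrFun h0 i
        simp only [Finset.sum_apply, Pi.mul_apply, Pi.zero_apply] at h0i
        rw [← h0i]
        refine Finset.sum_congr rfl fun j _ => ?_
        rw [hcr j]
        simp only [hGA, Matrix.of_apply, hxi]
        ring
      -- the matrix identity
      set d : Fin (k i) → F := fun r => a (Fin.castLE (hkn i) r) * a (Fin.castLE (hkn i) r) - 1
        with hd
      have key : ∀ r s : Fin (k i),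
          ∑ j, ((G i r j * a j) * (G i s j * a j) - G i r j * G i s j)
            = if r = s then d r else 0 := by
        intro r s
        rw [Finset.sum_eq_single (Fin.castLE (hkn i) r)]
        · rw [hstd i r r, hstd i s r]
          by_cases hsr : s = r
          · subst hsr; simp [hd]
          · have hrs : ¬ r = s := fun h => hsr h.symm
            simp [hsr, hrs]
        · intro j _ hj
          by_cases hjR : ∃ s' ∈ R i, Fin.castLE (hkn i) s' = j
          · obtain ⟨s', hs'R, rfl⟩ := hjR
            have hrs' : r ≠ s' := fun h => hj (by rw [h])
            rw [hstd i r s']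
            simp [hrs']
          · push_neg at hjR
            have haj : α j i = 1 ∨ α j i = -1 := hα2 i j hjR
            have ha2 : a j * a j = 1 := by
              rcases haj with h | h <;> simp [ha, h]
            have : (G i r j * a j) * (G i s j * a j)
                = G i r j * G i s j * (a j * a j) := by ring
            rw [this, ha2, mul_one, sub_self]
        · intro h; exact absurd (Finset.mem_univ _) h
      have hM : GA * GAᵀ = G i * (G i)ᵀ + Matrix.diagonal d := by
        ext r s
        simp only [Matrix.mul_apply, Matrix.add_apply, Matrix.transpose_apply,
          Matrix.diagonal_apply, hGA, Matrix.of_apply]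
        have hks := key r s
        rw [Finset.sum_sub_distrib] at hks
        have := sub_eq_iff_eq_add.mp hks
        rw [this]
        ring
      -- nonvanishing determinant
      have hd0 : ∀ r, r ∉ R i → d r = 0 := by
        intro r hr
        have haj : α (Fin.castLE (hkn i) r) i = 1 ∨ α (Fin.castLE (hkn i) r) i = -1 := by
          refine hα2 i _ fun s' hs' h => hr ?_
          have : s' = r := Fin.castLE_injective (hkn i) h
          exact this ▸ hs'
        rcases haj with h | h <;> simp [hd, ha, h]
      have hdne : ∀ r ∈ R i, d r ≠ 0 := by
        intro r hr
        obtain ⟨h1, h2⟩ := hα1 i r hr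
        have hfac : d r = (a (Fin.castLE (hkn i) r) - 1) * (a (Fin.castLE (hkn i) r) + 1) := by
          rw [hd]; ring
        rw [hfac]
        exact mul_ne_zero (sub_ne_zero.mpr h1) fun h => h2 (eq_neg_of_add_eq_zero_left h)
      have hvan' : ∀ S : Finset (Fin (k i)), S.card < (R i).card →
          (minorOff (G i * (G i)ᵀ) S).det = 0 := by
        intro S hS
        have hc := hRcard i
        exact hvanish i S (by omega)
      have hdet : (GA * GAᵀ).det ≠ 0 := by
        rw [hM]
        exact detAddDiag _ d (R i) hd0 hdne hvan' (hRdet i)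
      -- conclude w = 0
      have hMw : (GA * GAᵀ) *ᵥ w = 0 := by
        funext r
        have h1 : ((GA * GAᵀ) *ᵥ w) r = ∑ s, (∑ j, GA r j * GA s j) * w s := by
          simp [Matrix.mulVec, Matrix.mul_apply, dotProduct, Matrix.transpose_apply]
        rw [h1]
        have h2 : ∑ s, (∑ j, GA r j * GA s j) * w s = ∑ j, GA r j * xi j := by
          simp_rw [Finset.sum_mul]
          rw [Finset.sum_comm]
          refine Finset.sum_congr rfl fun j _ => ?_
          rw [hxw j, Finset.mul_sum]
          exact Finset.sum_congr rfl fun s _ => by ring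
        rw [h2, horth r]
        rfl
      have hw0 : w = 0 := Matrix.eq_zero_of_mulVec_eq_zero hdet hMw
      funext j
      show xi j = 0
      rw [hxw j, hw0]
      simp
    funext j
    funext i
    exact congrFun (hcomp i) j
  · rintro rfl
    refine ⟨⟨0, C.zero_mem, ?_⟩, ?_⟩
    · funext j; simp
    · intro t _
      simp
end

section
/- Let C = γ_1C_1 ⊕ γ_2C_2 ⊕ γ_3C_3 ⊕ γ_4C_4 be a linear code of length n over R with component codes C_1, C_2, C_3, C_4, each nonzero. Then C is an MDS code over R if and only if each C_i is an MDS code over F_q and d_H(C_1) = d_H(C_2) = d_H(C_3) = d_H(C_4), i.e. the component codes are MDS codes with the same parameters. -/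
open scoped BigOperators

set_option linter.unusedSectionVars false
set_option linter.unusedVariables false

section AuxLemmas

variable {F : Type*} [Field F] [Fintype F] [DecidableEq F] {n : ℕ}

lemma dHam_le' {ι : Type*} [Fintype ι] {D : Set (ι → F)} {x : ι → F}
    (hx : x ∈ D) (hx0 : x ≠ 0) : dHam D ≤ hammingNorm x :=
  Nat.sInf_le ⟨x, ⟨hx, hx0⟩, rfl⟩

lemma dHam_attained' {ι : Type*} [Fintype ι] {D : Set (ι → F)}
    (h : ∃ x ∈ D, x ≠ 0) : ∃ x ∈ D, x ≠ 0 ∧ hammingNorm x = dHam D := by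
  obtain ⟨x, hx, hx0⟩ := h
  obtain ⟨y, ⟨hy, hy0⟩, hyw⟩ := Nat.sInf_mem
    (⟨_, ⟨x, ⟨hx, hx0⟩, rfl⟩⟩ : (hammingNorm '' {x ∈ D | x ≠ 0}).Nonempty)
  exact ⟨y, hy, hy0, hyw⟩

lemma dLee_le' {D : Set (Fin n → RR F)} {c : Fin n → RR F}
    (hc : c ∈ D) (h0 : c ≠ 0) : dLee D ≤ leeWt c :=
  Nat.sInf_le ⟨c, ⟨hc, h0⟩, rfl⟩

lemma dLee_attained' {D : Set (Fin n → RR F)}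
    (h : ∃ c ∈ D, c ≠ 0) : ∃ c ∈ D, c ≠ 0 ∧ leeWt c = dLee D := by
  obtain ⟨x, hx, hx0⟩ := h
  obtain ⟨y, ⟨hy, hy0⟩, hyw⟩ := Nat.sInf_mem
    (⟨_, ⟨x, ⟨hx, hx0⟩, rfl⟩⟩ : (leeWt '' {c ∈ D | c ≠ 0}).Nonempty)
  exact ⟨y, hy, hy0, hyw⟩

lemma hammingNorm_eq_sum {ι : Type*} [Fintype ι] (x : ι → F) :
    hammingNorm x = ∑ j, if x j ≠ 0 then 1 else 0 :=
  Finset.card_filter _ _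

lemma hammingNorm_single' {ι : Type*} [Fintype ι] [DecidableEq ι] (i : ι) (a : F) :
    hammingNorm (Pi.single i a : ι → F) = if a ≠ 0 then 1 else 0 := by
  rw [hammingNorm_eq_sum, Finset.sum_eq_single i]
  · rw [Pi.single_eq_same]
  · intro b _ hb
    simp [Pi.single_apply, hb]
  · simp

lemma leeWt_eq_sum (c : Fin n → RR F) :
    leeWt c = ∑ i : Fin 4, hammingNorm (fun j => c j i) := by
  simp only [leeWt, hammingNorm_eq_sum]
  exact Finset.sum_comm

variable {C : Submodule (RR F) (Fin n → RR F)}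

lemma proj_mem_compCode {c : Fin n → RR F} (hc : c ∈ C) (i : Fin 4) :
    (fun j => c j i) ∈ compCode (C : Set (Fin n → RR F)) i :=
  ⟨c, hc, fun _ => rfl⟩

lemma compCode_exists_ne_zero {i : Fin 4}
    (hnz : compCode (C : Set (Fin n → RR F)) i ≠ {0}) :
    ∃ x ∈ compCode (C : Set (Fin n → RR F)) i, x ≠ 0 := by
  by_contra h
  push_neg at h
  exact hnz (Set.eq_singleton_iff_unique_mem.mpr
    ⟨⟨0, C.zero_mem, fun _ => rfl⟩, h⟩)

lemma compCode_sub {i : Fin 4} {x y : Fin n → F}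
    (hx : x ∈ compCode (C : Set (Fin n → RR F)) i)
    (hy : y ∈ compCode (C : Set (Fin n → RR F)) i) :
    x - y ∈ compCode (C : Set (Fin n → RR F)) i := by
  obtain ⟨c, hc, hcx⟩ := hx
  obtain ⟨c', hc', hcy⟩ := hy
  exact ⟨c - c', sub_mem hc hc', fun j => by
    simp only [Pi.sub_apply, hcx j, hcy j]⟩

lemma singleton_bound {D : Set (Fin n → F)}
    (hsub : ∀ x ∈ D, ∀ y ∈ D, x - y ∈ D)
    (hex : ∃ x ∈ D, x ≠ 0) {K : ℕ} (hkk : Nat.card D = Fintype.card F ^ K) :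
    dHam D + K ≤ n + 1 := by
  obtain ⟨x0, hx0, hx00, hxw⟩ := dHam_attained' hex
  set d := dHam D with hd
  have hd1 : 1 ≤ d := by rw [← hxw]; exact hammingNorm_pos_iff.mpr hx00
  have hdn : d ≤ n := by
    rw [← hxw]
    simpa using (hammingNorm_le_card_fintype (x := x0))
  obtain ⟨S, -, hScard⟩ := Finset.exists_subset_card_eq
    (s := (Finset.univ : Finset (Fin n))) (n := d - 1) (by simp; omega)
  have hinj : Function.Injective
      (fun (x : D) (j : {j : Fin n // j ∉ S}) => (x : Fin n → F) (j : Fin n)) := by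
    rintro ⟨x, hx⟩ ⟨y, hy⟩ hxy
    simp only [Subtype.mk.injEq]
    by_contra hne
    have hne' : x - y ≠ 0 := sub_ne_zero.mpr hne
    have h1 : d ≤ hammingNorm (x - y) := dHam_le' (hsub x hx y hy) hne'
    have h2 : hammingNorm (x - y) ≤ S.card := by
      apply Finset.card_le_card
      intro j hj
      rw [Finset.mem_filter] at hj
      by_contra hjS
      refine hj.2 ?_
      rw [Pi.sub_apply, sub_eq_zero]
      exact congrFun hxy ⟨j, hjS⟩
    omega
  have hcc : Fintype.card {j : Fin n // j ∉ S} = n - (d - 1) := by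
    rw [Fintype.card_subtype_compl]
    simp [hScard]
  have hcard : Nat.card D ≤ Fintype.card F ^ (n - (d - 1)) := by
    have h := Nat.card_le_card_of_injective _ hinj
    have hrhs : Nat.card ({ j : Fin n // j ∉ S } → F) =
        Fintype.card F ^ (n - (d - 1)) := by
      rw [Nat.card_eq_fintype_card, Fintype.card_fun, hcc]
    rwa [hrhs] at h
  have hq : 1 < Fintype.card F := Fintype.one_lt_card
  have hK' : K ≤ n - (d - 1) :=
    (Nat.pow_le_pow_iff_right hq).mp (by rw [← hkk]; exact hcard)
  omega

lemma card_C_eq (C : Submodule (RR F) (Fin n → RR F)) :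
    Nat.card C = ∏ i : Fin 4, Nat.card (compCode (C : Set (Fin n → RR F)) i) := by
  rw [← Nat.card_pi]
  refine Nat.card_congr (Equiv.ofBijective
    (fun c i => (⟨fun j => (c : Fin n → RR F) j i, proj_mem_compCode c.2 i⟩ :
      compCode (C : Set (Fin n → RR F)) i)) ⟨?_, ?_⟩)
  · rintro ⟨c, hc⟩ ⟨c', hc'⟩ h
    have hall : ∀ i j, c j i = c' j i := by
      intro i j
      have h1 := congrFun h i
      exact congrFun (Subtype.ext_iff.mp h1) j
    exact Subtype.ext (funext fun j => funext fun i => hall i j)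
  · intro x
    choose cc hcc hcx using fun i => (x i).2
    refine ⟨⟨∑ i, gam F i • cc i,
      Submodule.sum_mem _ fun i _ => Submodule.smul_mem _ _ (hcc i)⟩, ?_⟩
    funext i
    apply Subtype.ext
    funext j
    show (∑ i', gam F i' • cc i') j i = (x i : Fin n → F) j
    rw [← hcx i j]
    simp only [Finset.sum_apply, Pi.smul_apply, smul_eq_mul, Pi.mul_apply,
      gam, Pi.single_apply]
    rw [Finset.sum_eq_single i]
    · simp
    · intro b _ hb
      rw [if_neg (fun h' => hb h'.symm), zero_mul]
    · simp

lemma dLee_le_dHam (C : Submodule (RR F) (Fin n → RR F)) {i : Fin 4}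
    (hnz : compCode (C : Set (Fin n → RR F)) i ≠ {0}) :
    dLee (C : Set (Fin n → RR F)) ≤ dHam (compCode (C : Set (Fin n → RR F)) i) := by
  obtain ⟨x, hx, hx0, hxw⟩ := dHam_attained' (compCode_exists_ne_zero hnz)
  obtain ⟨c, hc, hcx⟩ := hx
  have hmem : gam F i • c ∈ C := C.smul_mem _ hc
  have hval : ∀ j, (gam F i • c) j = Pi.single i (x j) := by
    intro j
    funext i'
    simp only [Pi.smul_apply, smul_eq_mul, Pi.mul_apply, gam, Pi.single_apply]
    by_cases h : i' = i
    · subst h; simp [hcx j]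
    · simp [h]
  have h0 : gam F i • c ≠ 0 := by
    intro h
    apply hx0
    funext j
    have h1 := congrFun (congrFun h j) i
    rw [hval j] at h1
    simpa using h1
  calc dLee (C : Set (Fin n → RR F)) ≤ leeWt (gam F i • c) := dLee_le' hmem h0
    _ = hammingNorm x := by
        simp only [leeWt, hval, hammingNorm_single']
        rw [hammingNorm_eq_sum]
    _ = dHam (compCode (C : Set (Fin n → RR F)) i) := hxw

lemma exists_dHam_le_dLee (C : Submodule (RR F) (Fin n → RR F))
    (hnz : compCode (C : Set (Fin n → RR F)) 0 ≠ {0}) :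
    ∃ i, dHam (compCode (C : Set (Fin n → RR F)) i) ≤ dLee (C : Set (Fin n → RR F)) := by
  obtain ⟨x, hx, hx0⟩ := compCode_exists_ne_zero hnz
  obtain ⟨c0, hc0, hc0x⟩ := hx
  have hC : ∃ c ∈ (C : Set (Fin n → RR F)), c ≠ 0 :=
    ⟨c0, hc0, fun h => hx0 (funext fun j => by rw [← hc0x j, h]; simp)⟩
  obtain ⟨c, hc, hcne, hcw⟩ := dLee_attained' hC
  have hproj : ∃ i, (fun j => c j i) ≠ (0 : Fin n → F) := by
    by_contra h
    push_neg at h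
    exact hcne (funext fun j => funext fun i => by
      have := congrFun (h i) j; simpa using this)
  obtain ⟨i, hi⟩ := hproj
  refine ⟨i, ?_⟩
  calc dHam (compCode (C : Set (Fin n → RR F)) i)
      ≤ hammingNorm (fun j => c j i) := dHam_le' (proj_mem_compCode hc i) hi
    _ ≤ leeWt c := by
        rw [leeWt_eq_sum]
        exact Finset.single_le_sum (f := fun i : Fin 4 => hammingNorm fun j => c j i)
          (fun _ _ => Nat.zero_le _) (Finset.mem_univ i)
    _ = dLee (C : Set (Fin n → RR F)) := hcw

end AuxLemmas

/-- `C` (with `|C| = q^K`, `|C_i| = q^{k_i}`, components nonzero) is MDS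
over `R` — i.e. `4·d_L(C) = 4n − K + 4` — iff each component code `C_i` is MDS over
`F_q` — i.e. `d_H(C_i) = n − k_i + 1` — with all the `d_H(C_i)` equal. -/
theorem statement17 {p e n : ℕ} (hp : p.Prime) (he : 0 < e)
    (F : Type*) [Field F] [Fintype F] [DecidableEq F] (hcard : Fintype.card F = p ^ e)
    (C : Submodule (RR F) (Fin n → RR F))
    (hnz : ∀ i, compCode (C : Set (Fin n → RR F)) i ≠ {0})
    (K : ℕ) (hK : Nat.card C = Fintype.card F ^ K)
    (k : Fin 4 → ℕ)
    (hk : ∀ i, Nat.card (compCode (C : Set (Fin n → RR F)) i) = Fintype.card F ^ k i) :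
    4 * dLee (C : Set (Fin n → RR F)) + K = 4 * n + 4 ↔
      (∀ i, dHam (compCode (C : Set (Fin n → RR F)) i) + k i = n + 1) ∧
      ∀ i i', dHam (compCode (C : Set (Fin n → RR F)) i) =
        dHam (compCode (C : Set (Fin n → RR F)) i') := by
  
  classical
  clear hp he hcard
  have hq : 1 < Fintype.card F := Fintype.one_lt_card
  have hex : ∀ i, ∃ x ∈ compCode (C : Set (Fin n → RR F)) i, x ≠ 0 :=
    fun i => compCode_exists_ne_zero (hnz i)
  have hsing : ∀ i, dHam (compCode (C : Set (Fin n → RR F)) i) + k i ≤ n + 1 :=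
    fun i => singleton_bound (fun x hx y hy => compCode_sub hx hy) (hex i) (hk i)
  have hKsum : K = ∑ i, k i := by
    have h1 : Fintype.card F ^ K = Fintype.card F ^ (∑ i, k i) := by
      rw [← hK, card_C_eq, ← Finset.prod_pow_eq_pow_sum]
      exact Finset.prod_congr rfl fun i _ => hk i
    exact Nat.pow_right_injective hq h1
  have hle : ∀ i, dLee (C : Set (Fin n → RR F)) ≤
      dHam (compCode (C : Set (Fin n → RR F)) i) := fun i => dLee_le_dHam C (hnz i)
  obtain ⟨i₀, hi₀⟩ := exists_dHam_le_dLee C (hnz 0)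
  constructor
  · intro hmain
    have hub : ∀ j, dLee (C : Set (Fin n → RR F)) + k j ≤ n + 1 :=
      fun j => le_trans (Nat.add_le_add_right (hle j) _) (hsing j)
    have hall : ∀ j, dLee (C : Set (Fin n → RR F)) + k j = n + 1 := by
      by_contra hcon
      push_neg at hcon
      obtain ⟨j₀, hj₀⟩ := hcon
      have hlt : dLee (C : Set (Fin n → RR F)) + k j₀ < n + 1 :=
        lt_of_le_of_ne (hub j₀) hj₀
      have hs := Finset.sum_lt_sum
        (f := fun j : Fin 4 => dLee (C : Set (Fin n → RR F)) + k j)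
        (g := fun _ : Fin 4 => n + 1)
        (fun j _ => hub j) ⟨j₀, Finset.mem_univ _, hlt⟩
      rw [Finset.sum_add_distrib, Finset.sum_const, Finset.sum_const] at hs
      simp only [Finset.card_univ, Fintype.card_fin, smul_eq_mul] at hs
      rw [← hKsum] at hs
      omega
    constructor
    · intro i
      have h1 := hall i
      have h2 := hle i
      have h3 := hsing i
      omega
    · intro i i'
      have h1 := hall i
      have h1' := hall i'
      have h2 := hle i
      have h2' := hle i'
      have h3 := hsing i
      have h3' := hsing i'
      omega
  · rintro ⟨h1, h2⟩
    have hL : ∀ i, dLee (C : Set (Fin n → RR F)) + k i = n + 1 := by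
      intro i
      have e1 := h2 i i₀
      have e2 := hle i
      have e3 := hle i₀
      have e4 := h1 i
      omega
    have hsum : ∑ i : Fin 4, (dLee (C : Set (Fin n → RR F)) + k i) =
        ∑ _i : Fin 4, (n + 1) := Finset.sum_congr rfl fun i _ => hL i
    rw [Finset.sum_add_distrib, Finset.sum_const, Finset.sum_const] at hsum
    simp only [Finset.card_univ, Fintype.card_fin, smul_eq_mul] at hsum
    rw [← hKsum] at hsum
    omega
end
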